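/- Under the Gaussian latent factor model, the reconstructions x̂_i = t_0 + P_k(x_i − t_0) satisfy the risk decomposition (1/n) Σ_{i=1}^n E‖x̂_i − V_0 y_i‖² = E[tr{(I_p − P_k) S_0}] + (2/n) Σ_{i=1}^n E(x̂_i' ε_i) − pσ², provided all the expectations are finite. -/

import Mathlib

open Matrix MeasureTheory ProbabilityTheory Finset

/-- A measure `μ` on `ℝ^q` is the `q`-variate Gaussian distribution `N_q(m, C)` iff every
linear functional pushes it forward to the corresponding univariate Gaussian distribution. -/
def IsMvGaussianLaw (q : ℕ) (μ : Measure (Fin q → ℝ)) (m : Fin q → ℝ)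
    (C : Matrix (Fin q) (Fin q) ℝ) : Prop :=
  ∀ a : Fin q → ℝ,
    μ.map (fun v => a ⬝ᵥ v)
      = ProbabilityTheory.gaussianReal (a ⬝ᵥ m) (Real.toNNReal (a ⬝ᵥ C.mulVec a))

/-- Codomain family for the combined family `(y_1, …, y_n, ε_1, …, ε_n)`. -/
abbrev famType (n d p : ℕ) : Fin n ⊕ Fin n → Type :=
  Sum.elim (fun _ => Fin d → ℝ) (fun _ => Fin p → ℝ)

/-- The measurable-space structures on the codomains of the combined family. -/
def famMS (n d p : ℕ) : ∀ s : Fin n ⊕ Fin n, MeasurableSpace (famType n d p s)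
  | .inl _ => (inferInstance : MeasurableSpace (Fin d → ℝ))
  | .inr _ => (inferInstance : MeasurableSpace (Fin p → ℝ))

/-- The combined family `(y_1, …, y_n, ε_1, …, ε_n)` of random vectors. -/
def fam {Ω : Type*} {n d p : ℕ} (Y : Fin n → Ω → (Fin d → ℝ))
    (E : Fin n → Ω → (Fin p → ℝ)) : ∀ s : Fin n ⊕ Fin n, Ω → famType n d p s
  | .inl i => Y i
  | .inr i => E i

/-- `P` is the orthogonal projection onto the span of eigenvectors of `A` corresponding to its
`k` largest eigenvalues, where `A` has `p` distinct eigenvalues. -/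
def IsTopProj (p k : ℕ) (A P : Matrix (Fin p) (Fin p) ℝ) : Prop :=
  ∃ (u : Fin p → Fin p → ℝ) (s : Fin p → ℝ),
    (∀ a b, u a ⬝ᵥ u b = if a = b then (1 : ℝ) else 0) ∧ StrictAnti s ∧
    (∀ ℓ, A.mulVec (u ℓ) = s ℓ • u ℓ) ∧
    P = ∑ ℓ ∈ Finset.univ.filter (fun ℓ : Fin p => (ℓ : ℕ) < k), Matrix.vecMulVec (u ℓ) (u ℓ)

open Classical in
/-- The orthogonal projection onto the span of eigenvectors of `A` corresponding to its `k`
largest eigenvalues (well defined whenever the eigenvalues of `A` are distinct, which holds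
almost surely for the sample covariance matrix under the model below). -/
noncomputable def topProj (p k : ℕ) (A : Matrix (Fin p) (Fin p) ℝ) :
    Matrix (Fin p) (Fin p) ℝ :=
  if h : ∃ P, IsTopProj p k A P then h.choose else 0

/-- The sample mean `t₀` of the sample `X`. -/
noncomputable def sampleMean (n p : ℕ) (X : Fin n → Fin p → ℝ) : Fin p → ℝ :=
  (n : ℝ)⁻¹ • ∑ ℓ, X ℓ

/-- The sample covariance matrix `S₀` of the sample `X`. -/
noncomputable def sampleCov (n p : ℕ) (X : Fin n → Fin p → ℝ) : Matrix (Fin p) (Fin p) ℝ :=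
  (n : ℝ)⁻¹ • ∑ ℓ, Matrix.vecMulVec (X ℓ - sampleMean n p X) (X ℓ - sampleMean n p X)


open Real
open scoped NNReal ENNReal

lemma gaussWD {v : ℝ≥0} (hv : v ≠ 0) (m : ℝ) :
    gaussianReal m v
      = (volume : Measure ℝ).withDensity (fun x => ((gaussianPDFReal m v x).toNNReal : ENNReal)) := by
  rw [gaussianReal_of_var_ne_zero m hv]; rfl

lemma gauss_integrable_iff {v : ℝ≥0} (hv : v ≠ 0) (m : ℝ) (g : ℝ → ℝ) :
    Integrable g (gaussianReal m v)
      ↔ Integrable (fun x => gaussianPDFReal m v x * g x) volume := by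
  rw [gaussWD hv m,
    integrable_withDensity_iff_integrable_smul ((measurable_gaussianPDFReal m v).real_toNNReal)]
  refine integrable_congr (Filter.Eventually.of_forall fun x => ?_)
  simp [NNReal.smul_def, Real.coe_toNNReal _ (gaussianPDFReal_nonneg m v x)]

lemma gauss_integral_eq {v : ℝ≥0} (hv : v ≠ 0) (m : ℝ) (g : ℝ → ℝ) :
    ∫ x, g x ∂(gaussianReal m v) = ∫ x, gaussianPDFReal m v x * g x := by
  rw [gaussWD hv m,
    integral_withDensity_eq_integral_smul ((measurable_gaussianPDFReal m v).real_toNNReal)]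
  refine integral_congr_ae (Filter.Eventually.of_forall fun x => ?_)
  simp [NNReal.smul_def, Real.coe_toNNReal _ (gaussianPDFReal_nonneg m v x)]

lemma gaussianPDFReal_zero_eq {v : ℝ≥0} (x : ℝ) :
    gaussianPDFReal 0 v x = (√(2 * π * v))⁻¹ * rexp (-(2 * (v:ℝ))⁻¹ * x ^ 2) := by
  rw [gaussianPDFReal]
  congr 1
  rw [sub_zero]
  by_cases hv : (v:ℝ) = 0
  · simp [hv]
  · field_simp

lemma integrable_id_gauss (v : ℝ≥0) : Integrable (fun x => x) (gaussianReal 0 v) := by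
  by_cases hv : v = 0
  · rw [hv, gaussianReal_zero_var]
    refine (integrable_const (0:ℝ)).congr ?_
    rw [Filter.EventuallyEq, MeasureTheory.ae_dirac_eq]
    simp
  · rw [gauss_integrable_iff hv]
    have hb : 0 < (2 * (v:ℝ))⁻¹ := by
      have : 0 < (v : ℝ) := lt_of_le_of_ne (v.coe_nonneg) (by simpa using (NNReal.coe_ne_zero.2 hv).symm)
      positivity
    have := (integrable_mul_exp_neg_mul_sq hb).const_mul (√(2 * π * v))⁻¹
    refine this.congr (Filter.Eventually.of_forall fun x => ?_)
    simp only [gaussianPDFReal_zero_eq]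
    ring

lemma integrable_sq_gauss (v : ℝ≥0) : Integrable (fun x => x ^ 2) (gaussianReal 0 v) := by
  by_cases hv : v = 0
  · rw [hv, gaussianReal_zero_var]
    refine (integrable_const (0:ℝ)).congr ?_
    rw [Filter.EventuallyEq, MeasureTheory.ae_dirac_eq]
    simp
  · rw [gauss_integrable_iff hv]
    have hb : 0 < (2 * (v:ℝ))⁻¹ := by
      have : 0 < (v : ℝ) := lt_of_le_of_ne (v.coe_nonneg) (by simpa using (NNReal.coe_ne_zero.2 hv).symm)
      positivity
    have h2 := (integrable_rpow_mul_exp_neg_mul_sq hb (by norm_num : (-1:ℝ) < 2)).const_mul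
      (√(2 * π * (v:ℝ)))⁻¹
    have h2' : Integrable (fun x : ℝ =>
        (√(2 * π * (v:ℝ)))⁻¹ * (x ^ (2:ℕ) * rexp (-(2 * (v:ℝ))⁻¹ * x ^ 2))) volume := by
      refine h2.congr (Filter.Eventually.of_forall fun x => ?_)
      dsimp only
      have : x ^ (2:ℝ) = x ^ (2:ℕ) := by
        rw [← Real.rpow_natCast x 2]; norm_num
      rw [this]
    refine h2'.congr (Filter.Eventually.of_forall fun x => ?_)
    simp only [gaussianPDFReal_zero_eq]
    ring

lemma integral_id_gauss (v : ℝ≥0) : ∫ x, x ∂(gaussianReal 0 v) = 0 := by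
  have h : Measure.map (fun x : ℝ => (-1 : ℝ) * x) (gaussianReal 0 v) = gaussianReal 0 v := by
    rw [gaussianReal_map_const_mul (-1 : ℝ)]
    norm_num
  have h2 : ∫ x, x ∂(gaussianReal 0 v)
      = ∫ x, (-1 : ℝ) * x ∂(gaussianReal 0 v) := by
    conv_lhs => rw [← h]
    exact integral_map (f := fun y : ℝ => y) (by fun_prop) measurable_id.aestronglyMeasurable
  have : ∫ x, (-1:ℝ) * x ∂(gaussianReal 0 v) = - ∫ x, x ∂(gaussianReal 0 v) := by
    simp only [neg_one_mul]
    exact integral_neg _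
  linarith [h2, this]

lemma integral_sq_exp_line {b : ℝ} (hb : 0 < b) :
    ∫ x : ℝ, x ^ 2 * rexp (-b * x ^ 2) = b ^ (-(3:ℝ)/2) * (1/2) * Real.Gamma (3/2) * 2 := by
  have hint : Integrable (fun x : ℝ => x ^ 2 * rexp (-b * x ^ 2)) := by
    have h2 := integrable_rpow_mul_exp_neg_mul_sq hb (by norm_num : (-1:ℝ) < 2)
    refine h2.congr (Filter.Eventually.of_forall fun x => ?_)
    dsimp only
    have : x ^ (2:ℝ) = x ^ (2:ℕ) := by
      rw [← Real.rpow_natCast x 2]; norm_num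
    rw [this]
  have hIoi : ∫ x in Set.Ioi (0:ℝ), x ^ 2 * rexp (-b * x ^ 2)
      = b ^ (-(3:ℝ)/2) * (1/2) * Real.Gamma (3/2) := by
    have h := integral_rpow_mul_exp_neg_mul_rpow (p := 2) (q := 2) (b := b)
      two_pos (by norm_num) hb
    have heq : ∫ x in Set.Ioi (0:ℝ), x ^ (2:ℝ) * rexp (-b * x ^ (2:ℝ))
        = ∫ x in Set.Ioi (0:ℝ), x ^ 2 * rexp (-b * x ^ 2) := by
      refine setIntegral_congr_fun measurableSet_Ioi (fun x hx => ?_)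
      have : x ^ (2:ℝ) = x ^ (2:ℕ) := by
        rw [← Real.rpow_natCast x 2]; norm_num
      rw [this]
    rw [heq] at h
    rw [h]
    norm_num
  have hIic : ∫ x in Set.Iic (0:ℝ), x ^ 2 * rexp (-b * x ^ 2)
      = ∫ x in Set.Ioi (0:ℝ), x ^ 2 * rexp (-b * x ^ 2) := by
    have h := integral_comp_neg_Iic (0:ℝ) (fun x => x ^ 2 * rexp (-b * x ^ 2))
    simp only [neg_zero] at h
    rw [← h]
    refine setIntegral_congr_fun measurableSet_Iic fun x _ => ?_
    rw [neg_sq]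
  rw [← intervalIntegral.integral_Iic_add_Ioi (b := (0:ℝ)) hint.integrableOn hint.integrableOn,
    hIic, hIoi]
  ring

lemma integral_sq_gauss (v : ℝ≥0) : ∫ x, x ^ 2 ∂(gaussianReal 0 v) = v := by
  by_cases hv : v = 0
  · rw [hv, gaussianReal_zero_var, integral_dirac]
    norm_num
  · have hvpos : 0 < (v : ℝ) :=
      lt_of_le_of_ne (v.coe_nonneg) (by simpa using (NNReal.coe_ne_zero.2 hv).symm)
    have hb : 0 < (2 * (v:ℝ))⁻¹ := by positivity
    rw [gauss_integral_eq hv]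
    simp only [gaussianPDFReal_zero_eq]
    have : ∫ x : ℝ, (√(2 * π * (v:ℝ)))⁻¹ * rexp (-(2 * (v:ℝ))⁻¹ * x ^ 2) * x ^ 2
        = (√(2 * π * (v:ℝ)))⁻¹ * ∫ x : ℝ, x ^ 2 * rexp (-(2 * (v:ℝ))⁻¹ * x ^ 2) := by
      rw [← integral_const_mul]
      congr 1
      ext x
      ring
    rw [this, integral_sq_exp_line hb]
    -- now pure arithmetic
    have hG : Real.Gamma (3/2) = (1/2) * √π := by
      rw [show (3/2 : ℝ) = 1/2 + 1 by norm_num, Real.Gamma_add_one (by norm_num),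
        Real.Gamma_one_half_eq]
    have ht : (0:ℝ) < 2 * (v:ℝ) := by positivity
    have hpow : ((2 * (v:ℝ))⁻¹) ^ (-(3:ℝ)/2) = (2 * (v:ℝ)) ^ ((3:ℝ)/2) := by
      rw [Real.inv_rpow ht.le, ← Real.rpow_neg ht.le]
      norm_num
    have h32 : (2 * (v:ℝ)) ^ ((3:ℝ)/2) = (2 * (v:ℝ)) * √(2 * (v:ℝ)) := by
      rw [show ((3:ℝ)/2) = 1 + 1/2 by norm_num, Real.rpow_add ht, Real.rpow_one,
        Real.sqrt_eq_rpow]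
    have hsqrt : √(2 * π * (v:ℝ)) = √(2 * (v:ℝ)) * √π := by
      rw [show (2 * π * (v:ℝ)) = (2 * (v:ℝ)) * π by ring, Real.sqrt_mul ht.le]
    rw [hpow, h32, hG, hsqrt]
    have hπ : (0:ℝ) < √π := Real.sqrt_pos.2 pi_pos
    have hs : (0:ℝ) < √(2 * (v:ℝ)) := Real.sqrt_pos.2 ht
    have hss : √(2 * (v:ℝ)) * √(2 * (v:ℝ)) = 2 * (v:ℝ) := Real.mul_self_sqrt ht.le
    field_simp

section MatrixAux
variable {P : ℕ}

lemma measurable_dot (a : Fin P → ℝ) : Measurable (fun v : Fin P → ℝ => a ⬝ᵥ v) := by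
  unfold dotProduct
  exact Finset.measurable_sum _ fun i _ => (measurable_pi_apply i).const_mul _

lemma dot_self_eq_sum_sq (u : Fin P → ℝ) : u ⬝ᵥ u = ∑ j, u j ^ 2 := by
  simp [dotProduct, sq]

lemma trace_mul_vecMulVec (M : Matrix (Fin P) (Fin P) ℝ) (v : Fin P → ℝ) :
    Matrix.trace (M * Matrix.vecMulVec v v) = v ⬝ᵥ M.mulVec v := by
  simp only [Matrix.trace, Matrix.diag, Matrix.mul_apply, Matrix.vecMulVec_apply,
    dotProduct, Matrix.mulVec, Finset.mul_sum]
  refine Finset.sum_congr rfl fun a _ => Finset.sum_congr rfl fun b _ => ?_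
  ring

lemma quad_eq (Q : Matrix (Fin P) (Fin P) ℝ) (hQ : Qᵀ * Q = Q) (v : Fin P → ℝ) :
    Q.mulVec v ⬝ᵥ Q.mulVec v = v ⬝ᵥ Q.mulVec v := by
  have h1 : Q.mulVec v ⬝ᵥ Q.mulVec v = (Qᵀ.mulVec (Q.mulVec v)) ⬝ᵥ v := by
    rw [Matrix.dotProduct_mulVec, Matrix.mulVec_transpose]
  rw [h1, Matrix.mulVec_mulVec, hQ, dotProduct_comm]

lemma per_i (Pm : Matrix (Fin P) (Fin P) ℝ)
    (hQ : (1 - Pm)ᵀ * (1 - Pm) = 1 - Pm)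
    (t x w e xh : Fin P → ℝ) (hx : x = w + e) (hxh : xh = t + Pm.mulVec (x - t)) :
    ∑ j, (xh j - w j) ^ 2
      = (x - t) ⬝ᵥ (1 - Pm).mulVec (x - t) + 2 * (xh ⬝ᵥ e) - 2 * (w ⬝ᵥ e) - e ⬝ᵥ e := by
  have hQv : (1 - Pm).mulVec (x - t) = x - xh := by
    rw [hxh, Matrix.sub_mulVec, Matrix.one_mulVec]
    abel
  have h1 : (fun j => xh j - w j) = e - (1 - Pm).mulVec (x - t) := by
    rw [hQv, hx]
    funext j
    simp [Pi.sub_apply, Pi.add_apply]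
    ring
  have key : ∑ j, (xh j - w j) ^ 2
      = (e - (1 - Pm).mulVec (x - t)) ⬝ᵥ (e - (1 - Pm).mulVec (x - t)) := by
    rw [dot_self_eq_sum_sq]
    refine Finset.sum_congr rfl fun j _ => ?_
    rw [← h1]
  rw [key]
  set qv := (1 - Pm).mulVec (x - t) with hq
  have hqq : qv ⬝ᵥ qv = (x - t) ⬝ᵥ qv := quad_eq _ hQ _
  have heq : e ⬝ᵥ qv = w ⬝ᵥ e + e ⬝ᵥ e - xh ⬝ᵥ e := by
    rw [hQv, dotProduct_sub, hx, dotProduct_add, dotProduct_comm e w,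
      dotProduct_comm e xh]
  have hexp : (e - qv) ⬝ᵥ (e - qv) = e ⬝ᵥ e - e ⬝ᵥ qv - qv ⬝ᵥ e + qv ⬝ᵥ qv := by
    rw [sub_dotProduct, dotProduct_sub, dotProduct_sub]
    ring
  rw [hexp, hqq, dotProduct_comm qv e, heq]
  ring

end MatrixAux
lemma vecMulVec_mul_vecMulVec {P : ℕ} (a b c d : Fin P → ℝ) :
    Matrix.vecMulVec a b * Matrix.vecMulVec c d = (b ⬝ᵥ c) • Matrix.vecMulVec a d := by
  ext i j
  simp only [Matrix.mul_apply, Matrix.vecMulVec_apply, Matrix.smul_apply, dotProduct,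
    smul_eq_mul, Finset.sum_mul, Finset.mul_sum]
  refine Finset.sum_congr rfl fun m _ => ?_
  ring

lemma topProj_spec (p k : ℕ) (A : Matrix (Fin p) (Fin p) ℝ) :
    (topProj p k A)ᵀ = topProj p k A ∧ topProj p k A * topProj p k A = topProj p k A := by
  rw [topProj]
  split_ifs with h
  · obtain ⟨u, s, hu, -, -, hP⟩ := h.choose_spec
    constructor
    · rw [hP, Matrix.transpose_sum]
      refine Finset.sum_congr rfl fun ℓ _ => ?_
      ext a b
      simp [Matrix.transpose_apply, Matrix.vecMulVec_apply, mul_comm]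
    · have hmul : ∀ ℓ m : Fin p, Matrix.vecMulVec (u ℓ) (u ℓ) * Matrix.vecMulVec (u m) (u m)
          = if ℓ = m then Matrix.vecMulVec (u ℓ) (u ℓ) else 0 := fun ℓ m => by
        rw [vecMulVec_mul_vecMulVec, hu ℓ m]
        split_ifs with hm
        · subst hm; rw [one_smul]
        · rw [zero_smul]
      rw [hP, Finset.sum_mul_sum]
      rw [Finset.sum_congr rfl fun ℓ _ => (Finset.sum_congr rfl fun m _ => hmul ℓ m)]
      rw [Finset.sum_congr rfl fun ℓ _ => Finset.sum_ite_eq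
        (Finset.univ.filter (fun ℓ : Fin p => (ℓ : ℕ) < k)) ℓ
        (fun _ => Matrix.vecMulVec (u ℓ) (u ℓ))]
      exact Finset.sum_congr rfl fun ℓ hℓ => if_pos hℓ
  · simp


lemma topProj_Q (p k : ℕ) (A : Matrix (Fin p) (Fin p) ℝ) :
    (1 - topProj p k A)ᵀ * (1 - topProj p k A) = 1 - topProj p k A := by
  obtain ⟨h1, h2⟩ := topProj_spec p k A
  rw [Matrix.transpose_sub, Matrix.transpose_one, h1, Matrix.sub_mul, Matrix.mul_sub,
    Matrix.mul_sub, one_mul, mul_one, h2]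
  simp

lemma sum_quad_eq_trace {n p : ℕ} (M : Matrix (Fin p) (Fin p) ℝ)
    (X : Fin n → Fin p → ℝ) :
    ∑ i, (X i - sampleMean n p X) ⬝ᵥ M.mulVec (X i - sampleMean n p X)
      = (n : ℝ) * Matrix.trace (M * sampleCov n p X) := by
  rw [sampleCov, Matrix.mul_smul, Matrix.trace_smul, Matrix.mul_sum, Matrix.trace_sum]
  rw [Finset.sum_congr rfl (fun i _ => (trace_mul_vecMulVec M (X i - sampleMean n p X)).symm)]
  rcases Nat.eq_zero_or_pos n with h | h
  · subst h; simp
  · have : (n:ℝ) ≠ 0 := Nat.cast_ne_zero.2 h.ne'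
    rw [smul_eq_mul, ← mul_assoc, mul_inv_cancel₀ this, one_mul]



section MVGAux
variable {Ω : Type*} [MeasureSpace Ω] [IsProbabilityMeasure (ℙ : Measure Ω)] {q : ℕ}

lemma mvg_map {Z : Ω → Fin q → ℝ} (hZ : Measurable Z) {C : Matrix (Fin q) (Fin q) ℝ}
    (h : IsMvGaussianLaw q ((ℙ : Measure Ω).map Z) 0 C) (a : Fin q → ℝ) :
    (ℙ : Measure Ω).map (fun ω => a ⬝ᵥ Z ω) = gaussianReal 0 (a ⬝ᵥ C.mulVec a).toNNReal := by
  have h2 := h a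
  rw [Measure.map_map (measurable_dot a) hZ] at h2
  simpa [Function.comp_def, dotProduct_zero] using h2

lemma mvg_integrable_dot {Z : Ω → Fin q → ℝ} (hZ : Measurable Z)
    {C : Matrix (Fin q) (Fin q) ℝ}
    (h : IsMvGaussianLaw q ((ℙ : Measure Ω).map Z) 0 C) (a : Fin q → ℝ) :
    Integrable (fun ω => a ⬝ᵥ Z ω) (ℙ : Measure Ω) := by
  have hm : Measurable (fun ω => a ⬝ᵥ Z ω) := (measurable_dot a).comp hZ
  have h1 : Integrable (fun x : ℝ => x) ((ℙ : Measure Ω).map (fun ω => a ⬝ᵥ Z ω)) := by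
    rw [mvg_map hZ h a]; exact integrable_id_gauss _
  exact (integrable_map_measure measurable_id.aestronglyMeasurable hm.aemeasurable).mp h1

lemma mvg_integral_dot {Z : Ω → Fin q → ℝ} (hZ : Measurable Z)
    {C : Matrix (Fin q) (Fin q) ℝ}
    (h : IsMvGaussianLaw q ((ℙ : Measure Ω).map Z) 0 C) (a : Fin q → ℝ) :
    ∫ ω, a ⬝ᵥ Z ω ∂(ℙ : Measure Ω) = 0 := by
  have hm : Measurable (fun ω => a ⬝ᵥ Z ω) := (measurable_dot a).comp hZ
  have h1 := integral_map (μ := (ℙ : Measure Ω)) (φ := fun ω => a ⬝ᵥ Z ω) hm.aemeasurable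
    (f := fun x : ℝ => x) measurable_id.aestronglyMeasurable
  rw [← h1, mvg_map hZ h a, integral_id_gauss]

lemma mvg_integrable_dot_sq {Z : Ω → Fin q → ℝ} (hZ : Measurable Z)
    {C : Matrix (Fin q) (Fin q) ℝ}
    (h : IsMvGaussianLaw q ((ℙ : Measure Ω).map Z) 0 C) (a : Fin q → ℝ) :
    Integrable (fun ω => (a ⬝ᵥ Z ω) ^ 2) (ℙ : Measure Ω) := by
  have hm : Measurable (fun ω => a ⬝ᵥ Z ω) := (measurable_dot a).comp hZ
  have h1 : Integrable (fun x : ℝ => x ^ 2) ((ℙ : Measure Ω).map (fun ω => a ⬝ᵥ Z ω)) := by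
    rw [mvg_map hZ h a]; exact integrable_sq_gauss _
  exact (integrable_map_measure (measurable_id.pow_const 2).aestronglyMeasurable
    hm.aemeasurable).mp h1

lemma mvg_integral_dot_sq {Z : Ω → Fin q → ℝ} (hZ : Measurable Z)
    {C : Matrix (Fin q) (Fin q) ℝ}
    (h : IsMvGaussianLaw q ((ℙ : Measure Ω).map Z) 0 C) (a : Fin q → ℝ) :
    ∫ ω, (a ⬝ᵥ Z ω) ^ 2 ∂(ℙ : Measure Ω) = ((a ⬝ᵥ C.mulVec a).toNNReal : ℝ) := by
  have hm : Measurable (fun ω => a ⬝ᵥ Z ω) := (measurable_dot a).comp hZ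
  have h1 := integral_map (μ := (ℙ : Measure Ω)) (φ := fun ω => a ⬝ᵥ Z ω) hm.aemeasurable
    (f := fun x : ℝ => x ^ 2) (measurable_id.pow_const 2).aestronglyMeasurable
  rw [← h1, mvg_map hZ h a, integral_sq_gauss]

end MVGAux

/-- Under the Gaussian latent factor model, the reconstructions
`x̂ᵢ = t₀ + P_k(xᵢ − t₀)` satisfy the risk decomposition
`(1/n) ∑ᵢ E‖x̂ᵢ − V₀yᵢ‖² = E[tr{(I_p − P_k)S₀}] + (2/n) ∑ᵢ E(x̂ᵢ'εᵢ) − pσ²`,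
provided all the expectations are finite. -/
theorem stmt_14 (n p d k : ℕ) (hn : 2 ≤ n) (hp : 2 ≤ p) (hd1 : 1 ≤ d) (hdp : d < p)
    (hk1 : 1 ≤ k) (hkp : k ≤ p)
    (σ : ℝ) (hσ : 0 < σ)
    (V₀ : Matrix (Fin p) (Fin d) ℝ) (hV₀ : V₀ᵀ * V₀ = 1)
    (lam : Fin d → ℝ) (hlam : ∀ a, 0 < lam a)
    (Ω : Type*) [MeasureSpace Ω] [IsProbabilityMeasure (ℙ : Measure Ω)]
    (Y : Fin n → Ω → (Fin d → ℝ)) (E : Fin n → Ω → (Fin p → ℝ))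
    (hYmeas : ∀ i, Measurable (Y i)) (hEmeas : ∀ i, Measurable (E i))
    (hY : ∀ i, IsMvGaussianLaw d ((ℙ : Measure Ω).map (Y i)) 0 (Matrix.diagonal lam))
    (hE : ∀ i, IsMvGaussianLaw p ((ℙ : Measure Ω).map (E i)) 0
      (σ ^ 2 • (1 : Matrix (Fin p) (Fin p) ℝ)))
    (hindep : iIndepFun (m := famMS n d p) (fam Y E) (ℙ : Measure Ω))
    (X : Fin n → Ω → (Fin p → ℝ)) (hX : ∀ i ω, X i ω = V₀.mulVec (Y i ω) + E i ω)
    (xhat : Fin n → Ω → (Fin p → ℝ))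
    (hxhat : ∀ i ω, xhat i ω = sampleMean n p (fun a => X a ω)
      + (topProj p k (sampleCov n p (fun a => X a ω))).mulVec
          (X i ω - sampleMean n p (fun a => X a ω)))
    (hint1 : ∀ i, Integrable
      (fun ω => ∑ j, (xhat i ω j - V₀.mulVec (Y i ω) j) ^ 2) (ℙ : Measure Ω))
    (hint2 : Integrable (fun ω =>
      Matrix.trace ((1 - topProj p k (sampleCov n p (fun a => X a ω)))
        * sampleCov n p (fun a => X a ω))) (ℙ : Measure Ω))
    (hint3 : ∀ i, Integrable (fun ω => xhat i ω ⬝ᵥ E i ω) (ℙ : Measure Ω)) :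
    (n : ℝ)⁻¹ * ∑ i, ∫ ω, ∑ j, (xhat i ω j - V₀.mulVec (Y i ω) j) ^ 2 ∂(ℙ : Measure Ω)
      = (∫ ω, Matrix.trace ((1 - topProj p k (sampleCov n p (fun a => X a ω)))
            * sampleCov n p (fun a => X a ω)) ∂(ℙ : Measure Ω))
        + (2 / (n : ℝ)) * ∑ i, ∫ ω, xhat i ω ⬝ᵥ E i ω ∂(ℙ : Measure Ω)
        - p * σ ^ 2 := by
  classical
  have hn0 : (n : ℝ) ≠ 0 := Nat.cast_ne_zero.2 (by omega)
  -- abbreviations as propositions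
  have key : ∀ (i : Fin n) (ω : Ω), (∑ j, (xhat i ω j - V₀.mulVec (Y i ω) j) ^ 2)
      = (X i ω - sampleMean n p (fun a => X a ω)) ⬝ᵥ
          (1 - topProj p k (sampleCov n p (fun a => X a ω))).mulVec
            (X i ω - sampleMean n p (fun a => X a ω))
        + 2 * (xhat i ω ⬝ᵥ E i ω) - 2 * (V₀.mulVec (Y i ω) ⬝ᵥ E i ω) - E i ω ⬝ᵥ E i ω := by
    intro i ω
    exact per_i _ (topProj_Q p k _) _ _ _ _ _ (hX i ω) (hxhat i ω)
  have hindYE : ∀ i : Fin n, IndepFun (Y i) (E i) (ℙ : Measure Ω) := fun i =>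
    hindep.indepFun (show (Sum.inl i : Fin n ⊕ Fin n) ≠ Sum.inr i by simp)
  have hprod : ∀ (i : Fin n) (j : Fin p),
      Integrable (fun ω => ((fun b => V₀ j b) ⬝ᵥ Y i ω) * ((Pi.single j (1:ℝ)) ⬝ᵥ E i ω))
        (ℙ : Measure Ω)
      ∧ ∫ ω, ((fun b => V₀ j b) ⬝ᵥ Y i ω) * ((Pi.single j (1:ℝ)) ⬝ᵥ E i ω)
          ∂(ℙ : Measure Ω) = 0 := by
    intro i j
    have hYj := mvg_integrable_dot (hYmeas i) (hY i) (fun b => V₀ j b)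
    have hEj := mvg_integrable_dot (hEmeas i) (hE i) (Pi.single j (1:ℝ))
    have hYmean := mvg_integral_dot (hYmeas i) (hY i) (fun b => V₀ j b)
    have hind : IndepFun (fun ω => (fun b => V₀ j b) ⬝ᵥ Y i ω)
        (fun ω => (Pi.single j (1:ℝ)) ⬝ᵥ E i ω) (ℙ : Measure Ω) :=
      (hindYE i).comp (measurable_dot _) (measurable_dot _)
    refine ⟨hind.integrable_mul hYj hEj, ?_⟩
    have h2 := hind.integral_mul_eq_mul_integral hYj.aestronglyMeasurable hEj.aestronglyMeasurable
    rw [hYmean, zero_mul] at h2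
    exact h2
  have hWrepr : ∀ i : Fin n, (fun ω => V₀.mulVec (Y i ω) ⬝ᵥ E i ω)
      = fun ω => ∑ j, ((fun b => V₀ j b) ⬝ᵥ Y i ω) * ((Pi.single j (1:ℝ)) ⬝ᵥ E i ω) := by
    intro i; funext ω
    simp only [single_dotProduct, one_mul]
    rfl
  have hW : ∀ i : Fin n, Integrable (fun ω => V₀.mulVec (Y i ω) ⬝ᵥ E i ω) (ℙ : Measure Ω)
      ∧ ∫ ω, V₀.mulVec (Y i ω) ⬝ᵥ E i ω ∂(ℙ : Measure Ω) = 0 := by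
    intro i
    constructor
    · rw [hWrepr i]
      exact integrable_finset_sum _ fun j _ => (hprod i j).1
    · rw [hWrepr i, integral_finset_sum _ fun j _ => (hprod i j).1,
        Finset.sum_congr rfl fun j _ => (hprod i j).2]
      simp
  have hE2 : ∀ i : Fin n, Integrable (fun ω => E i ω ⬝ᵥ E i ω) (ℙ : Measure Ω)
      ∧ ∫ ω, E i ω ⬝ᵥ E i ω ∂(ℙ : Measure Ω) = p * σ ^ 2 := by
    intro i
    have hrepr : (fun ω => E i ω ⬝ᵥ E i ω)
        = fun ω => ∑ j, ((Pi.single j (1:ℝ)) ⬝ᵥ E i ω) ^ 2 := by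
      funext ω
      rw [dot_self_eq_sum_sq]
      refine Finset.sum_congr rfl fun j _ => ?_
      rw [single_dotProduct, one_mul]
    have hvar : ∀ j : Fin p, ((Pi.single j (1:ℝ)) ⬝ᵥ
        ((σ ^ 2 • (1 : Matrix (Fin p) (Fin p) ℝ)).mulVec (Pi.single j (1:ℝ)))) = σ ^ 2 := by
      intro j
      rw [Matrix.smul_mulVec, Matrix.one_mulVec, dotProduct_smul,
        single_dotProduct]
      simp
    constructor
    · rw [hrepr]
      exact integrable_finset_sum _ fun j _ => mvg_integrable_dot_sq (hEmeas i) (hE i) _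
    · rw [hrepr, integral_finset_sum _ fun j _ => mvg_integrable_dot_sq (hEmeas i) (hE i) _,
        Finset.sum_congr rfl fun j _ => mvg_integral_dot_sq (hEmeas i) (hE i) (Pi.single j 1),
        Finset.sum_congr rfl fun j _ => by rw [hvar j]]
      rw [Finset.sum_congr rfl fun j _ => Real.coe_toNNReal _ (sq_nonneg σ)]
      simp [Finset.card_univ, mul_comm]
  -- the quadratic form functions
  have hgeq : ∀ i : Fin n, (fun ω => (X i ω - sampleMean n p (fun a => X a ω)) ⬝ᵥ
        (1 - topProj p k (sampleCov n p (fun a => X a ω))).mulVec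
          (X i ω - sampleMean n p (fun a => X a ω)))
      = fun ω => (((∑ j, (xhat i ω j - V₀.mulVec (Y i ω) j) ^ 2)
          - 2 * (xhat i ω ⬝ᵥ E i ω)) + 2 * (V₀.mulVec (Y i ω) ⬝ᵥ E i ω)) + E i ω ⬝ᵥ E i ω := by
    intro i; funext ω; rw [key i ω]; ring
  have hgint : ∀ i : Fin n, Integrable (fun ω => (X i ω - sampleMean n p (fun a => X a ω)) ⬝ᵥ
      (1 - topProj p k (sampleCov n p (fun a => X a ω))).mulVec
        (X i ω - sampleMean n p (fun a => X a ω))) (ℙ : Measure Ω) := by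
    intro i
    rw [hgeq i]
    exact (((hint1 i).sub ((hint3 i).const_mul 2)).add ((hW i).1.const_mul 2)).add (hE2 i).1
  have hgval : ∀ i : Fin n, ∫ ω, (X i ω - sampleMean n p (fun a => X a ω)) ⬝ᵥ
      (1 - topProj p k (sampleCov n p (fun a => X a ω))).mulVec
        (X i ω - sampleMean n p (fun a => X a ω)) ∂(ℙ : Measure Ω)
      = (∫ ω, ∑ j, (xhat i ω j - V₀.mulVec (Y i ω) j) ^ 2 ∂(ℙ : Measure Ω))
        - 2 * (∫ ω, xhat i ω ⬝ᵥ E i ω ∂(ℙ : Measure Ω)) + p * σ ^ 2 := by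
    intro i
    have I3 : Integrable (fun ω => 2 * (xhat i ω ⬝ᵥ E i ω)) (ℙ : Measure Ω) :=
      (hint3 i).const_mul 2
    have I4 : Integrable (fun ω => 2 * (V₀.mulVec (Y i ω) ⬝ᵥ E i ω)) (ℙ : Measure Ω) :=
      (hW i).1.const_mul 2
    have I1 : Integrable (fun ω => (∑ j, (xhat i ω j - V₀.mulVec (Y i ω) j) ^ 2)
        - 2 * (xhat i ω ⬝ᵥ E i ω)) (ℙ : Measure Ω) := (hint1 i).sub I3
    have I2 : Integrable (fun ω => ((∑ j, (xhat i ω j - V₀.mulVec (Y i ω) j) ^ 2)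
        - 2 * (xhat i ω ⬝ᵥ E i ω)) + 2 * (V₀.mulVec (Y i ω) ⬝ᵥ E i ω)) (ℙ : Measure Ω) :=
      I1.add I4
    rw [hgeq i, integral_add I2 (hE2 i).1, integral_add I1 I4,
      integral_sub (hint1 i) I3, integral_const_mul, integral_const_mul, (hW i).2, (hE2 i).2]
    ring
  -- trace identity
  have htr : (n : ℝ) * ∫ ω, Matrix.trace ((1 - topProj p k (sampleCov n p (fun a => X a ω)))
        * sampleCov n p (fun a => X a ω)) ∂(ℙ : Measure Ω)
      = ∑ i, ∫ ω, (X i ω - sampleMean n p (fun a => X a ω)) ⬝ᵥ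
          (1 - topProj p k (sampleCov n p (fun a => X a ω))).mulVec
            (X i ω - sampleMean n p (fun a => X a ω)) ∂(ℙ : Measure Ω) := by
    rw [← integral_finset_sum _ fun i _ => hgint i, ← integral_const_mul]
    refine integral_congr_ae (Filter.Eventually.of_forall fun ω => ?_)
    exact (sum_quad_eq_trace (1 - topProj p k (sampleCov n p (fun a => X a ω)))
      (fun a => X a ω)).symm
  have hfin : ∑ i, ∫ ω, ∑ j, (xhat i ω j - V₀.mulVec (Y i ω) j) ^ 2 ∂(ℙ : Measure Ω)
      = (n : ℝ) * (∫ ω, Matrix.trace ((1 - topProj p k (sampleCov n p (fun a => X a ω)))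
            * sampleCov n p (fun a => X a ω)) ∂(ℙ : Measure Ω))
        + 2 * (∑ i, ∫ ω, xhat i ω ⬝ᵥ E i ω ∂(ℙ : Measure Ω)) - (n : ℝ) * (p * σ ^ 2) := by
    have h1 : ∑ i, ∫ ω, (X i ω - sampleMean n p (fun a => X a ω)) ⬝ᵥ
        (1 - topProj p k (sampleCov n p (fun a => X a ω))).mulVec
          (X i ω - sampleMean n p (fun a => X a ω)) ∂(ℙ : Measure Ω)
        = ∑ i, ((∫ ω, ∑ j, (xhat i ω j - V₀.mulVec (Y i ω) j) ^ 2 ∂(ℙ : Measure Ω))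
          - 2 * (∫ ω, xhat i ω ⬝ᵥ E i ω ∂(ℙ : Measure Ω)) + p * σ ^ 2) :=
      Finset.sum_congr rfl fun i _ => hgval i
    rw [h1] at htr
    rw [Finset.sum_add_distrib, Finset.sum_sub_distrib, Finset.sum_const, Finset.card_univ,
      Fintype.card_fin, nsmul_eq_mul, ← Finset.mul_sum] at htr
    linarith [htr]
  rw [hfin]
  field_simp
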